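/- Let G be a finite undirected graph, M a maximum matching, e = {u,v} ∈ M, and M' = M \ {e}. If P is an M'-augmenting path in G with one endpoint v and other endpoint w, then M' ⊕ P is a maximum matching of G whose set of covered vertices equals (vertices covered by M) \ {u} ∪ {w}. -/

import Mathlib

variable {V : Type*} [Fintype V] [DecidableEq V]

/-- A matching of `G` all of whose edges lie inside the vertex set `W`
(i.e. a matching of the induced subgraph `G[W]`). -/
def IsMatchingOn (G : SimpleGraph V) (W : Set V) (M : Finset (Sym2 V)) : Prop :=
  (∀ e ∈ M, e ∈ G.edgeSet) ∧ (∀ e ∈ M, ∀ v ∈ e, v ∈ W) ∧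
  (M : Set (Sym2 V)).Pairwise fun e f => ∀ v, v ∈ e → v ∉ f

/-- Vertices covered by a set of edges. -/
def mcovered (M : Finset (Sym2 V)) : Set V := {v | ∃ e ∈ M, v ∈ e}

/-- `w(G[W])`: maximum cardinality of a matching of `G[W]`. -/
noncomputable def mmax (G : SimpleGraph V) (W : Set V) : ℕ :=
  sSup {n | ∃ M, IsMatchingOn G W M ∧ M.card = n}

/-- `w^L(G[W])`: minimum number of `L`-vertices covered over maximum matchings of `G[W]`. -/
noncomputable def mwL (G : SimpleGraph V) (L W : Set V) : ℕ :=
  sInf {k | ∃ M, IsMatchingOn G W M ∧ M.card = mmax G W ∧ (mcovered M ∩ L).ncard = k}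

/-- The edges of a path given by a vertex list. -/
def pathEdges (p : List V) : Finset (Sym2 V) :=
  ((p.zip p.tail).map fun q => s(q.1, q.2)).toFinset

/-- An `M`-augmenting path inside `W`: endpoints `M`-unmatched, edges alternating
outside/inside `M`, starting and ending with a non-matching edge. -/
def IsAugPathOn (G : SimpleGraph V) (W : Set V) (M : Finset (Sym2 V)) (p : List V) : Prop :=
  2 ≤ p.length ∧ p.Nodup ∧ p.Chain' G.Adj ∧ (∀ v ∈ p, v ∈ W) ∧
  (∀ h : p ≠ [], p.head h ∉ mcovered M ∧ p.getLast h ∉ mcovered M) ∧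
  ∀ i (h : i + 1 < p.length),
    (s(p.get ⟨i, Nat.lt_of_succ_lt h⟩, p.get ⟨i + 1, h⟩) ∈ M ↔ i % 2 = 1)

set_option linter.unusedSectionVars false
set_option maxHeartbeats 1000000

lemma mem_pathEdges_iff {p : List V} {e : Sym2 V} :
    e ∈ pathEdges p ↔ ∃ i, ∃ hi : i + 1 < p.length,
      e = s(p[i]'(Nat.lt_of_succ_lt hi), p[i+1]'hi) := by
  unfold pathEdges
  simp only [List.mem_toFinset, List.mem_map]
  constructor
  · rintro ⟨⟨a, b⟩, hab, rfl⟩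
    rw [List.mem_iff_getElem] at hab
    obtain ⟨i, hi, hq⟩ := hab
    have hlen : i + 1 < p.length := by
      simp only [List.length_zip, List.length_tail] at hi; omega
    refine ⟨i, hlen, ?_⟩
    rw [List.getElem_zip, Prod.ext_iff] at hq
    obtain ⟨h1, h2⟩ := hq
    simp only [Prod.fst, Prod.snd] at h1 h2
    rw [← h1, ← h2, List.getElem_tail]
  · rintro ⟨i, hi, rfl⟩
    refine ⟨(p[i]'(Nat.lt_of_succ_lt hi), p[i+1]'hi), ?_, rfl⟩
    rw [List.mem_iff_getElem]
    have hzl : i < (p.zip p.tail).length := by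
      simp only [List.length_zip, List.length_tail]; omega
    exact ⟨i, hzl, by rw [List.getElem_zip, List.getElem_tail]⟩

lemma edge_index_inj {p : List V} (hnd : p.Nodup) {i j : ℕ}
    (hi : i + 1 < p.length) (hj : j + 1 < p.length)
    (hij : s(p[i]'(Nat.lt_of_succ_lt hi), p[i+1]'hi)
         = s(p[j]'(Nat.lt_of_succ_lt hj), p[j+1]'hj)) : i = j := by
  rw [Sym2.eq_iff] at hij
  rcases hij with ⟨h1, h2⟩ | ⟨h1, h2⟩
  · exact hnd.getElem_inj_iff.mp h1
  · have := hnd.getElem_inj_iff.mp h1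
    have := hnd.getElem_inj_iff.mp h2
    omega

lemma card_filter_parity (m : ℕ) :
    ((Finset.range m).filter (fun i => i % 2 = 1)).card = m / 2 ∧
    ((Finset.range m).filter (fun i => ¬ i % 2 = 1)).card = (m + 1) / 2 := by
  induction m with
  | zero => simp
  | succ m ih =>
    obtain ⟨ih1, ih2⟩ := ih
    rw [Finset.range_add_one, Finset.filter_insert, Finset.filter_insert]
    by_cases hm : m % 2 = 1
    · rw [if_pos hm, if_neg (by simp [hm]), Finset.card_insert_of_notMem (by simp)]
      constructor <;> omega
    · rw [if_neg hm, if_pos hm, Finset.card_insert_of_notMem (by simp)]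
      constructor <;> omega

/-- if `M` is a maximum matching, `e = {u,v} ∈ M`, `M' = M \ {e}`, and `p`
is an `M'`-augmenting path with endpoints `v` and `w`, then `M' ⊕ p` is a maximum
matching covering exactly `(covered M \ {u}) ∪ {w}`. -/
theorem stmt16 (G : SimpleGraph V) (M : Finset (Sym2 V))
    (hM : IsMatchingOn G Set.univ M) (hmax : M.card = mmax G Set.univ)
    (u v : V) (huv : s(u, v) ∈ M)
    (p : List V) (hp : IsAugPathOn G Set.univ (M.erase s(u, v)) p)
    (h : p ≠ []) (hv : p.head h = v) :
    IsMatchingOn G Set.univ (symmDiff (M.erase s(u, v)) (pathEdges p)) ∧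
    (symmDiff (M.erase s(u, v)) (pathEdges p)).card = mmax G Set.univ ∧
    mcovered (symmDiff (M.erase s(u, v)) (pathEdges p)) =
      (mcovered M \ {u}) ∪ {p.getLast h} := by
  obtain ⟨hlen2, hnd, hch, -, hends, halt0⟩ := hp
  set M' : Finset (Sym2 V) := M.erase s(u, v) with hM'def
  set P : Finset (Sym2 V) := pathEdges p with hPdef
  set n : ℕ := p.length with hndef
  -- restate alternation with getElem
  have halt : ∀ i (hi : i + 1 < n),
      (s(p[i]'(Nat.lt_of_succ_lt hi), p[i+1]'hi) ∈ M' ↔ i % 2 = 1) := by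
    intro i hi
    simpa using halt0 i hi
  have hn2 : 2 ≤ n := hlen2
  -- endpoints
  have hhead : p.head h = p[0]'(by omega) := List.head_eq_getElem_zero h
  have hlast : p.getLast h = p[n-1]'(by omega) := List.getLast_eq_getElem h
  obtain ⟨hheadunc, hlastunc⟩ := hends h
  rw [hhead] at hheadunc
  rw [hlast] at hlastunc
  -- pairwise disjointness of M (and M')
  have hMpair : ∀ e ∈ M, ∀ f ∈ M, e ≠ f → ∀ x, x ∈ e → x ∉ f := by
    intro e he f hf hef x
    exact hM.2.2 he hf hef x
  have hM'sub : M' ⊆ M := Finset.erase_subset _ _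
  -- n is even
  have hneven : n % 2 = 0 := by
    by_contra hodd
    have hb : (n - 2) + 1 < n := by omega
    have := (halt (n - 2) hb).mpr (by omega)
    apply hlastunc
    refine ⟨_, this, ?_⟩
    have : n - 2 + 1 = n - 1 := by omega
    simp only [this]
    exact Sym2.mem_mk_right _ _
  -- every M'-edge touching a path vertex is a path edge
  have key : ∀ i (hi : i < n) (e : Sym2 V), e ∈ M' → (p[i]'hi) ∈ e → e ∈ P := by
    intro i hi e heM hxe
    by_cases h0 : i = 0
    · exact absurd ⟨e, heM, h0 ▸ hxe⟩ hheadunc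
    by_cases hl : i = n - 1
    · exact absurd ⟨e, heM, hl ▸ hxe⟩ hlastunc
    have hi1 : i + 1 < n := by omega
    by_cases hpar : i % 2 = 1
    · have hf : s(p[i]'(by omega), p[i+1]'hi1) ∈ M' := (halt i hi1).mpr hpar
      have he : e = s(p[i]'(by omega), p[i+1]'hi1) := by
        by_contra hne
        exact hMpair e (hM'sub heM) _ (hM'sub hf) hne _ hxe (Sym2.mem_mk_left _ _)
      rw [he, hPdef, mem_pathEdges_iff]
      exact ⟨i, hi1, rfl⟩
    · have hb : (i-1) + 1 < n := by omega
      have hf : s(p[i-1]'(by omega), p[i-1+1]'hb) ∈ M' := (halt (i-1) hb).mpr (by omega)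
      have hmem : (p[i]'hi) ∈ s(p[i-1]'(by omega), p[i-1+1]'hb) := by
        have hsi : i - 1 + 1 = i := by omega
        simp only [hsi]
        exact Sym2.mem_mk_right _ _
      have he : e = s(p[i-1]'(by omega), p[i-1+1]'hb) := by
        by_contra hne
        exact hMpair e (hM'sub heM) _ (hM'sub hf) hne _ hxe hmem
      rw [he, hPdef, mem_pathEdges_iff]
      exact ⟨i-1, hb, rfl⟩
  -- the symmetric difference
  set D : Finset (Sym2 V) := symmDiff M' P with hDdef
  have hmemD : ∀ e : Sym2 V, e ∈ D ↔ (e ∈ M' ∧ e ∉ P) ∨ (e ∈ P ∧ e ∉ M') := by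
    intro e; exact Finset.mem_symmDiff
  -- path edges are graph edges
  have hPedge : ∀ e ∈ P, e ∈ G.edgeSet := by
    intro e he
    rw [hPdef, mem_pathEdges_iff] at he
    obtain ⟨i, hi, rfl⟩ := he
    rw [SimpleGraph.mem_edgeSet]
    have := List.isChain_iff_getElem.mp hch i (by omega)
    simpa using this
  -- matching property
  have hPvertex : ∀ e ∈ P, ∀ x, x ∈ e → ∃ i : ℕ, ∃ hi : i < n, x = p[i]'hi := by
    intro e he x hx
    rw [hPdef, mem_pathEdges_iff] at he
    obtain ⟨i, hi, rfl⟩ := he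
    rw [Sym2.mem_iff] at hx
    rcases hx with rfl | rfl
    · exact ⟨i, by omega, rfl⟩
    · exact ⟨i+1, hi, rfl⟩
  have hmatch : IsMatchingOn G Set.univ D := by
    refine ⟨?_, fun _ _ _ _ => Set.mem_univ _, ?_⟩
    · intro e he
      rcases (hmemD e).mp he with ⟨he', -⟩ | ⟨he', -⟩
      · exact hM.1 e (hM'sub he')
      · exact hPedge e he'
    · intro e he f hf hef x hxe hxf
      rw [Finset.mem_coe, hmemD] at he hf
      rcases he with ⟨heM, heP⟩ | ⟨heP, heM⟩ <;> rcases hf with ⟨hfM, hfP⟩ | ⟨hfP, hfM⟩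
      · exact hMpair e (hM'sub heM) f (hM'sub hfM) hef x hxe hxf
      · obtain ⟨i, hi, rfl⟩ := hPvertex f hfP x hxf
        exact heP (key i hi e heM hxe)
      · obtain ⟨i, hi, rfl⟩ := hPvertex e heP x hxe
        exact hfP (key i hi f hfM hxf)
      · rw [hPdef, mem_pathEdges_iff] at heP hfP
        obtain ⟨i, hi, rfl⟩ := heP
        obtain ⟨j, hj, rfl⟩ := hfP
        have hie : ¬ i % 2 = 1 := fun hh => heM ((halt i hi).mpr hh)
        have hje : ¬ j % 2 = 1 := fun hh => hfM ((halt j hj).mpr hh)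
        have hij : i ≠ j := fun hh => hef (by subst hh; rfl)
        rw [Sym2.mem_iff] at hxe hxf
        rcases hxe with rfl | rfl <;> rcases hxf with he' | he' <;>
          · have := hnd.getElem_inj_iff.mp he'
            omega
  -- cardinality
  have hcard : D.card = M.card := by
    classical
    set f : ℕ → Sym2 V := fun i =>
      if hi : i + 1 < n then s(p[i]'(Nat.lt_of_succ_lt hi), p[i+1]'hi) else s(v, v) with hfdef
    have hf : ∀ i (hi : i + 1 < n), f i = s(p[i]'(Nat.lt_of_succ_lt hi), p[i+1]'hi) := by
      intro i hi
      simp only [hfdef, dif_pos hi]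
    have hfi : Set.InjOn f ↑(Finset.range (n-1)) := by
      intro i hi j hj hij
      simp only [Finset.coe_range, Set.mem_Iio] at hi hj
      rw [hf i (by omega), hf j (by omega)] at hij
      exact edge_index_inj hnd _ _ hij
    have hP : P = Finset.image f (Finset.range (n-1)) := by
      ext e
      rw [hPdef, mem_pathEdges_iff, Finset.mem_image]
      constructor
      · rintro ⟨i, hi, rfl⟩
        exact ⟨i, Finset.mem_range.mpr (by omega), hf i hi⟩
      · rintro ⟨i, hi, rfl⟩
        rw [Finset.mem_range] at hi
        exact ⟨i, by omega, by rw [hf i (by omega)]⟩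
    have hPM : M' ∩ P = Finset.image f ((Finset.range (n-1)).filter (fun i => i % 2 = 1)) := by
      ext e
      rw [Finset.mem_inter, Finset.mem_image]
      constructor
      · rintro ⟨heM, heP⟩
        rw [hPdef, mem_pathEdges_iff] at heP
        obtain ⟨i, hi, rfl⟩ := heP
        exact ⟨i, Finset.mem_filter.mpr ⟨Finset.mem_range.mpr (by omega), (halt i hi).mp heM⟩,
          hf i hi⟩
      · rintro ⟨i, hif, rfl⟩
        rw [Finset.mem_filter, Finset.mem_range] at hif
        obtain ⟨hir, hio⟩ := hif
        have hb : i + 1 < n := by omega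
        rw [hf i hb]
        refine ⟨(halt i hb).mpr hio, ?_⟩
        rw [hPdef, mem_pathEdges_iff]
        exact ⟨i, hb, rfl⟩
    have hPnM : P \ M' = Finset.image f ((Finset.range (n-1)).filter (fun i => ¬ i % 2 = 1)) := by
      ext e
      rw [Finset.mem_sdiff, Finset.mem_image]
      constructor
      · rintro ⟨heP, heM⟩
        rw [hPdef, mem_pathEdges_iff] at heP
        obtain ⟨i, hi, rfl⟩ := heP
        refine ⟨i, Finset.mem_filter.mpr ⟨Finset.mem_range.mpr (by omega), ?_⟩, hf i hi⟩
        exact fun hh => heM ((halt i hi).mpr hh)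
      · rintro ⟨i, hif, rfl⟩
        rw [Finset.mem_filter, Finset.mem_range] at hif
        obtain ⟨hir, hio⟩ := hif
        have hb : i + 1 < n := by omega
        rw [hf i hb]
        refine ⟨?_, fun hh => hio ((halt i hb).mp hh)⟩
        rw [hPdef, mem_pathEdges_iff]
        exact ⟨i, hb, rfl⟩
    have c2 : (M' ∩ P).card = (n-1)/2 := by
      rw [hPM, Finset.card_image_of_injOn
        (hfi.mono (Finset.coe_subset.mpr (Finset.filter_subset _ _))),
        (card_filter_parity (n-1)).1]
    have c3 : (P \ M').card = n/2 := by
      rw [hPnM, Finset.card_image_of_injOn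
        (hfi.mono (Finset.coe_subset.mpr (Finset.filter_subset _ _))),
        (card_filter_parity (n-1)).2]
      omega
    have c4 : (M' \ P).card + (M' ∩ P).card = M'.card := Finset.card_sdiff_add_card_inter M' P
    have c5 : M'.card = M.card - 1 := Finset.card_erase_of_mem huv
    have c6 : 1 ≤ M.card := Finset.card_pos.mpr ⟨_, huv⟩
    have c7 : (M' ∩ P).card ≤ M'.card := Finset.card_le_card Finset.inter_subset_left
    have hD2 : D.card = (M' \ P).card + (P \ M').card := by
      rw [hDdef, symmDiff_def, Finset.sup_eq_union]
      apply Finset.card_union_of_disjoint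
      rw [Finset.disjoint_left]
      intro a ha hb
      rw [Finset.mem_sdiff] at ha hb
      exact ha.2 hb.1
    omega
  -- coverage
  have hpathcov : ∀ i (hi : i < n), (p[i]'hi) ∈ mcovered D := by
    intro i hi
    by_cases hpar : i % 2 = 1
    · have hb : (i-1) + 1 < n := by omega
      have heP : s(p[i-1]'(by omega), p[i-1+1]'hb) ∈ P := by
        rw [hPdef, mem_pathEdges_iff]
        exact ⟨i-1, hb, rfl⟩
      have heM : s(p[i-1]'(by omega), p[i-1+1]'hb) ∉ M' := fun hh => by
        have := (halt (i-1) hb).mp hh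
        omega
      refine ⟨_, (hmemD _).mpr (Or.inr ⟨heP, heM⟩), ?_⟩
      have hsi : i - 1 + 1 = i := by omega
      simp only [hsi]
      exact Sym2.mem_mk_right _ _
    · have hb : i + 1 < n := by omega
      have heP : s(p[i]'(by omega), p[i+1]'hb) ∈ P := by
        rw [hPdef, mem_pathEdges_iff]
        exact ⟨i, hb, rfl⟩
      have heM : s(p[i]'(by omega), p[i+1]'hb) ∉ M' := fun hh => hpar ((halt i hb).mp hh)
      exact ⟨_, (hmemD _).mpr (Or.inr ⟨heP, heM⟩), Sym2.mem_mk_left _ _⟩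
  have hinternal : ∀ i (hi : i < n), 0 < i → i < n - 1 → (p[i]'hi) ∈ mcovered M' := by
    intro i hi h0 h1
    by_cases hpar : i % 2 = 1
    · have hb : i + 1 < n := by omega
      exact ⟨_, (halt i hb).mpr hpar, Sym2.mem_mk_left _ _⟩
    · have hb : (i-1)+1 < n := by omega
      refine ⟨_, (halt (i-1) hb).mpr (by omega), ?_⟩
      have hsi : i - 1 + 1 = i := by omega
      simp only [hsi]
      exact Sym2.mem_mk_right _ _
  have hcovM' : mcovered M' = mcovered M \ {u, v} := by
    ext x
    simp only [mcovered, Set.mem_setOf_eq, Set.mem_diff, Set.mem_insert_iff,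
      Set.mem_singleton_iff]
    constructor
    · rintro ⟨e, heM', hx⟩
      have heM : e ∈ M := hM'sub heM'
      have hene : e ≠ s(u,v) := (Finset.mem_erase.mp heM').1
      refine ⟨⟨e, heM, hx⟩, ?_⟩
      push_neg
      constructor
      · rintro rfl
        exact hMpair e heM _ huv hene x hx (Sym2.mem_mk_left _ _)
      · rintro rfl
        exact hMpair e heM _ huv hene x hx (Sym2.mem_mk_right _ _)
    · rintro ⟨⟨e, heM, hx⟩, hne⟩
      push_neg at hne
      refine ⟨e, Finset.mem_erase.mpr ⟨?_, heM⟩, hx⟩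
      rintro rfl
      rcases Sym2.mem_iff.mp hx with rfl | rfl
      · exact hne.1 rfl
      · exact hne.2 rfl
  have hcovD : mcovered D = mcovered M' ∪ {p[0]'(by omega), p[n-1]'(by omega)} := by
    apply Set.Subset.antisymm
    · rintro x ⟨e, heD, hx⟩
      simp only [Set.mem_union, Set.mem_insert_iff, Set.mem_singleton_iff]
      rcases (hmemD e).mp heD with ⟨heM', -⟩ | ⟨heP, -⟩
      · exact Or.inl ⟨e, heM', hx⟩
      · obtain ⟨i, hi, rfl⟩ := hPvertex e heP x hx
        by_cases h0 : i = 0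
        · subst h0
          exact Or.inr (Or.inl rfl)
        by_cases hl : i = n - 1
        · subst hl
          exact Or.inr (Or.inr rfl)
        · exact Or.inl (hinternal i hi (by omega) (by omega))
    · rintro x hx
      simp only [Set.mem_union, Set.mem_insert_iff, Set.mem_singleton_iff] at hx
      rcases hx with ⟨e, heM', hx⟩ | rfl | rfl
      · by_cases heP : e ∈ P
        · obtain ⟨i, hi, rfl⟩ := hPvertex e heP x hx
          exact hpathcov i hi
        · exact ⟨e, (hmemD e).mpr (Or.inl ⟨heM', heP⟩), hx⟩
      · exact hpathcov 0 (by omega)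
      · exact hpathcov (n-1) (by omega)
  have hcov : mcovered D = (mcovered M \ {u}) ∪ {p.getLast h} := by
    have hune : u ≠ v := by
      have hgd := hM.1 _ huv
      rw [SimpleGraph.mem_edgeSet] at hgd
      exact hgd.ne
    have hvcov : v ∈ mcovered M := ⟨_, huv, Sym2.mem_mk_right u v⟩
    have hp0 : p[0]'(by omega) = v := by rw [← hhead, hv]
    rw [hcovD, hcovM', hlast, hp0]
    ext x
    simp only [Set.mem_union, Set.mem_diff, Set.mem_insert_iff, Set.mem_singleton_iff]
    constructor
    · rintro (⟨hxM, hne⟩ | rfl | rfl)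
      · push_neg at hne
        exact Or.inl ⟨hxM, hne.1⟩
      · exact Or.inl ⟨hvcov, fun hh => hune hh.symm⟩
      · exact Or.inr rfl
    · rintro (⟨hxM, hxu⟩ | rfl)
      · by_cases hxv : x = v
        · exact Or.inr (Or.inl hxv)
        · exact Or.inl ⟨hxM, fun hh => (by rcases hh with rfl | rfl; exact hxu rfl; exact hxv rfl : False)⟩
      · exact Or.inr (Or.inr rfl)
  exact ⟨hmatch, by rw [hcard, hmax], hcov⟩
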